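/- For every β̂ ∈ dom R, the vector ŵ ∈ ℝⁿ defined by ŵ_j := l_j'(x_jᵀβ̂) for j = 1, …, n satisfies D_h(ŵ, w⁰) ≤ γM². -/

import Mathlib

/-- The convex conjugate of a univariate function. -/
noncomputable def conj (f : ℝ → ℝ) (w : ℝ) : ℝ :=
  sSup (Set.range fun s => w * s - f s)

/-- The Bregman distance associated with the separable reference function
`h(w) = (1/n) ∑ⱼ lⱼ*(wⱼ)`. -/
noncomputable def bregH (n : ℕ) (l : Fin n → ℝ → ℝ) (y x : Fin n → ℝ) : ℝ :=
  (1 / (n : ℝ)) * ∑ j, (conj (l j) (y j) - conj (l j) (x j)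
    - deriv (conj (l j)) (x j) * (y j - x j))

open Set

section helpers

variable {f : ℝ → ℝ} {γ : ℝ}

/-- tangent line inequality for a differentiable convex function on univ -/
lemma tangent_le (hc : ConvexOn ℝ Set.univ f) (hd : Differentiable ℝ f) (t s : ℝ) :
    f t + deriv f t * (s - t) ≤ f s := by
  rcases lt_trichotomy t s with h | h | h
  · have h1 := hc.deriv_le_slope (mem_univ t) (mem_univ s) h (hd t)
    rw [slope_def_field] at h1
    have hts : (0:ℝ) < s - t := by linarith
    rw [le_div_iff₀ hts] at h1
    linarith
  · simp [h]
  · have h1 := hc.slope_le_deriv (mem_univ s) (mem_univ t) h (hd t)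
    rw [slope_def_field] at h1
    have hts : (0:ℝ) < t - s := by linarith
    rw [div_le_iff₀ hts] at h1
    nlinarith
  
lemma conj_deriv_eq (hc : ConvexOn ℝ Set.univ f) (hd : Differentiable ℝ f) (t : ℝ) :
    conj f (deriv f t) = t * deriv f t - f t := by
  have hub : ∀ y ∈ Set.range (fun s => deriv f t * s - f s), y ≤ t * deriv f t - f t := by
    rintro y ⟨s, rfl⟩
    show deriv f t * s - f s ≤ t * deriv f t - f t
    have h1 := tangent_le hc hd t s
    nlinarith
  apply le_antisymm
  · exact csSup_le ⟨deriv f t * t - f t, t, rfl⟩ hub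
  · have hm : t * deriv f t - f t ∈ Set.range (fun s => deriv f t * s - f s) := ⟨t, by ring⟩
    exact le_csSup ⟨t * deriv f t - f t, hub⟩ hm

lemma hasDerivAt_conj_zero (hsc : StrictConvexOn ℝ Set.univ f) (hd : Differentiable ℝ f)
    (hcd : Continuous (deriv f)) : HasDerivAt (conj f) 0 (deriv f 0) := by
  have hc : ConvexOn ℝ Set.univ f := hsc.convexOn
  have hmono : StrictMonoOn (deriv f) Set.univ :=
    hsc.strictMonoOn_deriv (fun x _ => hd x)
  rw [hasDerivAt_iff_isLittleO, Asymptotics.isLittleO_iff]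
  intro ε hε
  have hlt1 : deriv f (-ε) < deriv f 0 := hmono (mem_univ _) (mem_univ _) (by linarith)
  have hlt2 : deriv f 0 < deriv f ε := hmono (mem_univ _) (mem_univ _) hε
  filter_upwards [Ioo_mem_nhds hlt1 hlt2] with w hw
  -- find t with deriv f t = w
  have hsub := intermediate_value_Icc (by linarith : (-ε:ℝ) ≤ ε) (hcd.continuousOn (s := Icc (-ε) ε))
  obtain ⟨t, ht, htw⟩ := hsub ⟨hw.1.le, hw.2.le⟩
  have hconjw : conj f w = t * w - f t := by rw [← htw]; exact conj_deriv_eq hc hd t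
  have hconj0 : conj f (deriv f 0) = - f 0 := by
    have := conj_deriv_eq hc hd 0; simpa using this
  have htan1 := tangent_le hc hd t 0
  have htan2 := tangent_le hc hd 0 t
  rw [htw] at htan1
  set w0 := deriv f 0 with hw0
  have hlow : 0 ≤ conj f w - conj f w0 := by
    rw [hconjw, hconj0]; nlinarith
  have hup : conj f w - conj f w0 ≤ t * (w - w0) := by
    rw [hconjw, hconj0]; nlinarith
  have habs : |conj f w - conj f w0| ≤ |t| * |w - w0| := by
    rw [abs_of_nonneg hlow]
    calc conj f w - conj f w0 ≤ t * (w - w0) := hup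
    _ ≤ |t * (w - w0)| := le_abs_self _
    _ = |t| * |w - w0| := abs_mul _ _
  have htle : |t| ≤ ε := abs_le.2 ⟨ht.1, ht.2⟩
  simp only [smul_zero, sub_zero, Real.norm_eq_abs]
  calc |conj f w - conj f w0| ≤ |t| * |w - w0| := habs
  _ ≤ ε * |w - w0| := by
      have := abs_nonneg (w - w0); nlinarith

/-- descent lemma (weak form, factor γ instead of γ/2) -/
lemma descent (hd : Differentiable ℝ f) (hγ : 0 < γ)
    (hsm : ∀ a b : ℝ, |deriv f a - deriv f b| ≤ γ * |a - b|) (b : ℝ) :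
    f 0 - f b + deriv f b * b ≤ γ * b ^ 2 := by
  rcases lt_trichotomy b 0 with h | h | h
  · obtain ⟨c, hc, hceq⟩ := exists_deriv_eq_slope f h (hd.continuous.continuousOn)
      (hd.differentiableOn)
    rw [eq_div_iff (by intro hh; apply h.ne; linarith : (0:ℝ) - b ≠ 0)] at hceq
    have h1 := hsm b c
    have h2 : |b - c| = c - b := by
      rw [abs_of_nonpos (by linarith [hc.1] : b - c ≤ 0)]; ring
    rw [h2] at h1
    have h3 := neg_abs_le (deriv f b - deriv f c)
    have h4 : -(γ * (c - b)) ≤ deriv f b - deriv f c := by linarith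
    have h5 := mul_le_mul_of_nonneg_right h4 (by linarith : (0:ℝ) ≤ -b)
    have h6 : 0 < γ * (c * b) := mul_pos hγ (mul_pos_of_neg_of_neg hc.2 h)
    nlinarith [h5, h6, hceq]
  · simp [h]
  · obtain ⟨c, hc, hceq⟩ := exists_deriv_eq_slope f h (hd.continuous.continuousOn)
      (hd.differentiableOn)
    rw [eq_div_iff (by intro hh; apply h.ne'; linarith : b - 0 ≠ 0)] at hceq
    have h1 := hsm b c
    have h2 : |b - c| = b - c := abs_of_nonneg (by linarith [hc.2])
    rw [h2] at h1
    have h3 := le_abs_self (deriv f b - deriv f c)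
    have h4 : deriv f b - deriv f c ≤ γ * (b - c) := h3.trans h1
    have h5 := mul_le_mul_of_nonneg_right h4 h.le
    have h6 : 0 < γ * (c * b) := mul_pos hγ (mul_pos hc.1 h)
    nlinarith [h5, h6, hceq]

end helpers

theorem stmt2 (n p : ℕ) (hn : 0 < n) (hp : 0 < p)
    (x : Fin n → Fin p → ℝ) (l : Fin n → ℝ → ℝ) (γ : ℝ) (hγ : 0 < γ)
    (hdiff : ∀ j, Differentiable ℝ (l j))
    (hsc : ∀ j, StrictConvexOn ℝ Set.univ (l j))
    (hsmooth : ∀ j, ∀ a b : ℝ, |deriv (l j) a - deriv (l j) b| ≤ γ * |a - b|)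
    (domR : Set (Fin p → ℝ)) (hbdd : Bornology.IsBounded domR)
    (hconv : Convex ℝ domR) (h0R : (0 : Fin p → ℝ) ∈ domR)
    (M : ℝ) (hM : ∀ β ∈ domR, ∀ j, |∑ i, x j i * β i| ≤ M)
    (βhat : Fin p → ℝ) (hβ : βhat ∈ domR) :
    bregH n l (fun j => deriv (l j) (∑ i, x j i * βhat i)) (fun j => deriv (l j) 0)
      ≤ γ * M ^ 2 := by
  have hM0 : 0 ≤ M := le_trans (abs_nonneg _) (hM βhat hβ ⟨0, hn⟩)
  unfold bregH
  have key : ∀ j : Fin n,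
      conj (l j) (deriv (l j) (∑ i, x j i * βhat i)) - conj (l j) (deriv (l j) 0)
        - deriv (conj (l j)) (deriv (l j) 0)
          * (deriv (l j) (∑ i, x j i * βhat i) - deriv (l j) 0) ≤ γ * M ^ 2 := by
    intro j
    set f := l j with hf
    set b := ∑ i, x j i * βhat i with hb
    have hc : ConvexOn ℝ Set.univ f := (hsc j).convexOn
    have hd : Differentiable ℝ f := hdiff j
    have hcd : Continuous (deriv f) := by
      have : LipschitzWith γ.toNNReal (deriv f) := by
        apply LipschitzWith.of_dist_le_mul
        intro a b'
        rw [Real.dist_eq, Real.dist_eq, Real.coe_toNNReal _ hγ.le]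
        exact hsmooth j a b'
      exact this.continuous
    have hD0 : deriv (conj f) (deriv f 0) = 0 :=
      (hasDerivAt_conj_zero (hsc j) hd hcd).deriv
    rw [hD0, conj_deriv_eq hc hd b, conj_deriv_eq hc hd 0]
    have hdes := descent hd hγ (hsmooth j) b
    have hbM : |b| ≤ M := hM βhat hβ j
    have hb2 : b ^ 2 ≤ M ^ 2 := sq_le_sq' (by cases abs_le.1 hbM; linarith) (abs_le.1 hbM).2
    have : γ * b ^ 2 ≤ γ * M ^ 2 := by nlinarith
    simp only [zero_mul, zero_sub, mul_zero]
    nlinarith [hdes]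
  calc (1 / (n : ℝ)) * ∑ j, (conj (l j) ((fun j => deriv (l j) (∑ i, x j i * βhat i)) j)
        - conj (l j) ((fun j => deriv (l j) 0) j)
        - deriv (conj (l j)) ((fun j => deriv (l j) 0) j)
          * ((fun j => deriv (l j) (∑ i, x j i * βhat i)) j - (fun j => deriv (l j) 0) j))
      ≤ (1 / (n : ℝ)) * ∑ _j : Fin n, γ * M ^ 2 := by
        apply mul_le_mul_of_nonneg_left (Finset.sum_le_sum (fun j _ => key j))
        positivity
    _ = γ * M ^ 2 := by
        rw [Finset.sum_const, Finset.card_univ, Fintype.card_fin]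
        have hn' : (n : ℝ) ≠ 0 := Nat.cast_ne_zero.2 hn.ne'
        field_simp
        rw [nsmul_eq_mul]; ring
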